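/- Let F = f + ψ where f : ℝⁿ → ℝ is differentiable at x and ψ : ℝⁿ → ℝ ∪ {+∞} is convex, proper, and closed, with x ∈ dom ψ. Let H be a symmetric n×n real matrix and define Q(d) = ∇f(x)ᵀd + (1/2)dᵀHd + ψ(x+d) − ψ(x). If Q is a convex function of d and Q(d) < 0 for some d, then d is a descent direction for F at x: there exists ᾱ > 0 such that F(x + αd) < F(x) for all α ∈ (0, ᾱ]. -/

import Mathlib

/-
Setting: minimize F = f + ψ over ℝⁿ (modeled as `EuclideanSpace ℝ (Fin n)`), where
f : ℝⁿ → ℝ is smooth and ψ : ℝⁿ → ℝ ∪ {+∞} (modeled as `EReal`-valued, never ⊥)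
is convex, proper and closed.  The quadratic model at x with symmetric operator H is
Q(d) = ⟪∇f(x), d⟫ + (1/2)⟪H d, d⟫ + ψ(x+d) − ψ(x), and Δ(d) = ⟪∇f(x), d⟫ + ψ(x+d) − ψ(x).
-/

open scoped RealInnerProductSpace
open Set Filter Topology

noncomputable section

/-- Convexity for extended-real-valued functions (values in ℝ ∪ {±∞}). -/
def ConvexE {n : ℕ} (g : EuclideanSpace ℝ (Fin n) → EReal) : Prop :=
  ∀ x y : EuclideanSpace ℝ (Fin n), ∀ a b : ℝ, 0 ≤ a → 0 ≤ b → a + b = 1 →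
    g (a • x + b • y) ≤ (a : EReal) * g x + (b : EReal) * g y

/-- ψ is proper: it never takes the value −∞ (its values lie in ℝ ∪ {+∞})
and it is finite somewhere. -/
def ProperPsi {n : ℕ} (ψ : EuclideanSpace ℝ (Fin n) → EReal) : Prop :=
  (∀ x, ψ x ≠ ⊥) ∧ ∃ x, ψ x ≠ ⊤

/-- ψ is closed, i.e. lower semicontinuous. -/
def ClosedPsi {n : ℕ} (ψ : EuclideanSpace ℝ (Fin n) → EReal) : Prop :=
  LowerSemicontinuous ψ

/-- H is a symmetric (self-adjoint) linear operator. -/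
def SymmCLM {n : ℕ} (H : EuclideanSpace ℝ (Fin n) →L[ℝ] EuclideanSpace ℝ (Fin n)) : Prop :=
  ∀ u v, ⟪H u, v⟫ = ⟪u, H v⟫

/-- m is the smallest eigenvalue of the symmetric operator H
(characterized as the minimum of the Rayleigh quotient over the unit sphere). -/
def IsSmallestEigenvalue {n : ℕ} (H : EuclideanSpace ℝ (Fin n) →L[ℝ] EuclideanSpace ℝ (Fin n))
    (m : ℝ) : Prop :=
  IsLeast {r : ℝ | ∃ u : EuclideanSpace ℝ (Fin n), ‖u‖ = 1 ∧ r = ⟪H u, u⟫} m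

/-- The objective F = f + ψ (extended-real-valued). -/
def Fm {n : ℕ} (f : EuclideanSpace ℝ (Fin n) → ℝ) (ψ : EuclideanSpace ℝ (Fin n) → EReal)
    (x : EuclideanSpace ℝ (Fin n)) : EReal :=
  (f x : EReal) + ψ x

/-- The quadratic model Q(d) = ∇f(x)ᵀd + (1/2)dᵀHd + ψ(x+d) − ψ(x). -/
def Qm {n : ℕ} (f : EuclideanSpace ℝ (Fin n) → ℝ) (ψ : EuclideanSpace ℝ (Fin n) → EReal)
    (H : EuclideanSpace ℝ (Fin n) →L[ℝ] EuclideanSpace ℝ (Fin n))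
    (x d : EuclideanSpace ℝ (Fin n)) : EReal :=
  ((⟪gradient f x, d⟫ + 1 / 2 * ⟪H d, d⟫ : ℝ) : EReal) + ψ (x + d) - ψ x

/-- Δ(d) = ∇f(x)ᵀd + ψ(x+d) − ψ(x). -/
def Dm {n : ℕ} (f : EuclideanSpace ℝ (Fin n) → ℝ) (ψ : EuclideanSpace ℝ (Fin n) → EReal)
    (x d : EuclideanSpace ℝ (Fin n)) : EReal :=
  ((⟪gradient f x, d⟫ : ℝ) : EReal) + ψ (x + d) - ψ x

/-- g is σ-strongly convex: g − (σ/2)‖·‖² is convex. -/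
def StrongConvexE {n : ℕ} (σ : ℝ) (g : EuclideanSpace ℝ (Fin n) → EReal) : Prop :=
  ConvexE (fun d => g d - ((σ / 2 * ‖d‖ ^ 2 : ℝ) : EReal))

/-- The solution set Ω = argmin F. -/
def SolSet {n : ℕ} (f : EuclideanSpace ℝ (Fin n) → ℝ)
    (ψ : EuclideanSpace ℝ (Fin n) → EReal) : Set (EuclideanSpace ℝ (Fin n)) :=
  {y | ∀ z, Fm f ψ y ≤ Fm f ψ z}

/-- If the quadratic model Q is convex and Q(d) < 0, then d is a descent
direction for F = f + ψ at x: there is ᾱ > 0 with F(x + αd) < F(x) for all α ∈ (0, ᾱ]. -/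
theorem descent_direction_of_Q_neg {n : ℕ}
    (f : EuclideanSpace ℝ (Fin n) → ℝ) (ψ : EuclideanSpace ℝ (Fin n) → EReal)
    (H : EuclideanSpace ℝ (Fin n) →L[ℝ] EuclideanSpace ℝ (Fin n))
    (x d : EuclideanSpace ℝ (Fin n))
    (hf : DifferentiableAt ℝ f x) (hH : SymmCLM H)
    (hψconv : ConvexE ψ) (hψproper : ProperPsi ψ) (hψclosed : ClosedPsi ψ)
    (hdom : ψ x ≠ ⊤)
    (hQconv : ConvexE (Qm f ψ H x))
    (hQd : Qm f ψ H x d < 0) :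
    ∃ ᾱ : ℝ, 0 < ᾱ ∧ ∀ α ∈ Set.Ioc (0 : ℝ) ᾱ, Fm f ψ (x + α • d) < Fm f ψ x := by
  obtain ⟨p0, hpx⟩ : ∃ p : ℝ, ψ x = (p : EReal) :=
    ⟨_, (EReal.coe_toReal hdom (hψproper.1 x)).symm⟩
  -- ψ (x+d) is real, hence Q d is a real number q < 0
  have hxd_ne_top : ψ (x + d) ≠ ⊤ := by
    intro htop
    have : Qm f ψ H x d = ⊤ := by
      rw [Qm, htop, hpx,
        EReal.add_top_of_ne_bot (by exact_mod_cast EReal.coe_ne_bot _),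
        EReal.top_sub_coe]
    rw [this] at hQd
    exact not_top_lt hQd
  obtain ⟨p1, hpxd⟩ : ∃ p : ℝ, ψ (x + d) = (p : EReal) :=
    ⟨_, (EReal.coe_toReal hxd_ne_top (hψproper.1 _)).symm⟩
  obtain ⟨q, hQdq⟩ : ∃ q : ℝ, Qm f ψ H x d = (q : EReal) := by
    refine ⟨(⟪gradient f x, d⟫ + 1 / 2 * ⟪H d, d⟫ : ℝ) + p1 - p0, ?_⟩
    rw [Qm, hpxd, hpx, ← EReal.coe_add, ← EReal.coe_sub]
  have hqneg : q < 0 := by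
    rw [hQdq] at hQd; exact_mod_cast hQd
  -- Q 0 = 0
  have hQ0 : Qm f ψ H x 0 = 0 := by
    rw [Qm]; simp [hpx, ← EReal.coe_sub]
  -- convexity: for α ∈ (0,1], Q(α d) ≤ α q
  have key : ∀ α : ℝ, 0 < α → α ≤ 1 → Qm f ψ H x (α • d) ≤ ((α * q : ℝ) : EReal) := by
    intro α hα0 hα1
    have h := hQconv d 0 α (1 - α) hα0.le (by linarith) (by ring)
    simp only [smul_zero, add_zero, hQ0, mul_zero, hQdq, ← EReal.coe_mul] at h
    exact h
  have hr : ∀ α : ℝ, (⟪gradient f x, α • d⟫ + 1 / 2 * ⟪H (α • d), α • d⟫ : ℝ)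
      = α * ⟪gradient f x, d⟫ + α ^ 2 * (⟪H d, d⟫ / 2) := by
    intro α
    rw [real_inner_smul_right, map_smul, inner_smul_left, inner_smul_right]
    simp; ring
  set c : ℝ := ⟪gradient f x, d⟫
  set b : ℝ := ⟪H d, d⟫
  -- hence ψ(x + α d) ≤ p0 + α q - (α c + α² b/2)  for α ∈ (0,1]
  have hψbound : ∀ α : ℝ, 0 < α → α ≤ 1 →
      ψ (x + α • d) ≤ ((p0 + α * q - (α * c + α ^ 2 * (b / 2)) : ℝ) : EReal) := by
    intro α hα0 hα1
    have hk := key α hα0 hα1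
    rw [Qm, hr α, hpx] at hk
    rcases eq_or_ne (ψ (x + α • d)) ⊤ with htop | hne
    · exfalso
      rw [htop, EReal.add_top_of_ne_bot (by exact_mod_cast EReal.coe_ne_bot _),
        EReal.top_sub_coe] at hk
      exact (EReal.coe_ne_top _) (top_le_iff.mp hk)
    · obtain ⟨pα, hpα⟩ : ∃ p : ℝ, ψ (x + α • d) = (p : EReal) :=
        ⟨_, (EReal.coe_toReal hne (hψproper.1 _)).symm⟩
      rw [hpα] at hk ⊢
      rw [← EReal.coe_add, ← EReal.coe_sub] at hk
      have h2 : (α * c + α ^ 2 * (b / 2)) + pα - p0 ≤ α * q := by exact_mod_cast hk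
      exact_mod_cast (by linarith : pα ≤ p0 + α * q - (α * c + α ^ 2 * (b / 2)))
  -- derivative of α ↦ f (x + α d) at 0 is c
  have hφ : HasDerivAt (fun α : ℝ => f (x + α • d)) c 0 := by
    have h1 : HasDerivAt (fun α : ℝ => x + α • d) d 0 := by
      simpa using ((hasDerivAt_id (0:ℝ)).smul_const d).const_add x
    have h2 : HasFDerivAt f
        ((InnerProductSpace.toDual ℝ (EuclideanSpace ℝ (Fin n))) (gradient f x))
        (x + (0:ℝ) • d) := by
      simpa using hf.hasGradientAt.hasFDerivAt
    exact h2.comp_hasDerivAt (0:ℝ) h1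
  -- slope estimate
  have hεpos : (0:ℝ) < -q / 4 := by linarith
  have hslope := hasDerivAt_iff_tendsto_slope.mp hφ
  have hev : ∀ᶠ α in 𝓝[≠] (0:ℝ),
      |slope (fun α : ℝ => f (x + α • d)) 0 α - c| < -q / 4 := by
    have := hslope (Metric.ball_mem_nhds c hεpos)
    filter_upwards [this] with α hα
    simpa [Metric.mem_ball, Real.dist_eq] using hα
  rw [eventually_nhdsWithin_iff, Metric.eventually_nhds_iff] at hev
  obtain ⟨δ, hδpos, hδ⟩ := hev
  refine ⟨min 1 (min (δ / 2) (2 * (-q / 4) / (|b| + 1))), ?_, ?_⟩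
  · exact lt_min one_pos (lt_min (by linarith) (by positivity))
  rintro α ⟨hα0, hαᾱ⟩
  have hα1 : α ≤ 1 := hαᾱ.trans (min_le_left _ _)
  have hαδ : α < δ := by
    have : α ≤ δ / 2 := hαᾱ.trans ((min_le_right _ _).trans (min_le_left _ _))
    linarith
  have hαb : α ≤ 2 * (-q / 4) / (|b| + 1) :=
    hαᾱ.trans ((min_le_right _ _).trans (min_le_right _ _))
  -- slope bound at α
  have hsl : |α⁻¹ * (f (x + α • d) - f x) - c| < -q / 4 := by
    have h := hδ (y := α) (by rw [Real.dist_eq]; simpa [abs_of_pos hα0] using hαδ)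
      (by simpa using hα0.ne')
    simpa [slope, hα0.ne', div_eq_inv_mul] using h
  have hfb : f (x + α • d) - f x - α * c ≤ (-q / 4) * α := by
    have h1 : α⁻¹ * (f (x + α • d) - f x) - c ≤ -q / 4 := (abs_lt.mp hsl).2.le
    have h2 : α⁻¹ * (f (x + α • d) - f x) ≤ c + -q / 4 := by linarith
    have h3 := (inv_mul_le_iff₀ hα0).mp h2
    nlinarith [hα0.le]
  -- quadratic term bound
  have hquad : -(α ^ 2 * (b / 2)) ≤ (-q / 4) * α := by
    have h1 : α * (|b| + 1) ≤ 2 * (-q / 4) := by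
      rw [le_div_iff₀ (by positivity)] at hαb
      linarith
    have h3 := neg_abs_le b
    nlinarith [abs_nonneg b, sq_nonneg α, hα0.le]
  -- combine
  have hψb := hψbound α hα0 hα1
  have hreal : f (x + α • d) + (p0 + α * q - (α * c + α ^ 2 * (b / 2))) < f x + p0 := by
    nlinarith [hfb, hquad, mul_pos hα0 (by linarith : (0:ℝ) < -q)]
  calc Fm f ψ (x + α • d) = ((f (x + α • d) : ℝ) : EReal) + ψ (x + α • d) := rfl
    _ ≤ ((f (x + α • d) : ℝ) : EReal)
        + ((p0 + α * q - (α * c + α ^ 2 * (b / 2)) : ℝ) : EReal) := add_le_add_right hψb _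
    _ = ((f (x + α • d) + (p0 + α * q - (α * c + α ^ 2 * (b / 2))) : ℝ) : EReal) := by
        rw [← EReal.coe_add]
    _ < ((f x + p0 : ℝ) : EReal) := by exact_mod_cast hreal
    _ = Fm f ψ x := by rw [Fm, hpx, ← EReal.coe_add]
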